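/- arXiv:2506.20705 — 2 statements merged into one kernel-verified Lean document; each statement's English description precedes it below -/
import Mathlib

section
/- Let W be an open bounded subset of ℝ^d with 0 ∈ W, and let f : W → ℝ be continuous at 0 and bounded on W. Then lim_{δ→−∞} ∫_W f(y) ‖y‖² e^{−2δ} N(y, δ) dy = f(0) · d, where N(y, δ) := (2π)^{−d/2} e^{−dδ} exp(−(1/2)‖y‖² e^{−2δ}). -/
open MeasureTheory Real Filter Set Topology Pointwise

noncomputable section

/-- The isotropic Gaussian density on `ℝ^d` with mean `0` and covariance `e^{2δ} I_d`:
`N(y, δ) = (2π)^{-d/2} e^{-dδ} exp(-‖y‖² e^{-2δ}/2)`. -/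
def gaussDensity {d : ℕ} (y : EuclideanSpace ℝ (Fin d)) (δ : ℝ) : ℝ :=
  (2 * π) ^ (-(d : ℝ) / 2) * Real.exp (-(d : ℝ) * δ) *
    Real.exp (-(1 / 2) * ‖y‖ ^ 2 * Real.exp (-2 * δ))

lemma gauss1d_integral : ∫ x : ℝ, Real.exp (-(1/2 : ℝ) * x ^ 2) = Real.sqrt (2 * π) := by
  rw [integral_gaussian]
  congr 1
  ring

lemma gauss1d_integrable : Integrable (fun x : ℝ => Real.exp (-(1/2 : ℝ) * x ^ 2)) :=
  integrable_exp_neg_mul_sq (by norm_num)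

lemma gauss1d_sq_integrable : Integrable (fun x : ℝ => x ^ 2 * Real.exp (-(1/2 : ℝ) * x ^ 2)) := by
  have h := integrable_rpow_mul_exp_neg_mul_sq (b := 1/2) (by norm_num) (s := 2) (by norm_num)
  have : ∀ x : ℝ, x ^ (2 : ℝ) = x ^ 2 := fun x => by
    rw [show ((2:ℝ) = ((2:ℕ):ℝ)) by norm_num, Real.rpow_natCast]
  simpa [this] using h

lemma gauss1d_sq_integral : ∫ x : ℝ, x ^ 2 * Real.exp (-(1/2 : ℝ) * x ^ 2) = Real.sqrt (2 * π) := by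
  have hF : ∀ x : ℝ, HasDerivAt (fun x : ℝ => -x * Real.exp (-(1/2 : ℝ) * x ^ 2))
      (x ^ 2 * Real.exp (-(1/2 : ℝ) * x ^ 2) - Real.exp (-(1/2 : ℝ) * x ^ 2)) x := by
    intro x
    have h1 : HasDerivAt (fun x : ℝ => -(1/2 : ℝ) * x ^ 2) (-x) x := by
      have := (hasDerivAt_pow 2 x).const_mul (-(1/2) : ℝ)
      refine this.congr_deriv ?_
      push_cast
      ring
    have h3 := (hasDerivAt_neg x).mul h1.exp
    refine h3.congr_deriv ?_
    ring
  have hT : Tendsto (fun x : ℝ => x * Real.exp (-(1/2 : ℝ) * x ^ 2)) atTop (𝓝 0) := by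
    have h := rpow_mul_exp_neg_mul_sq_isLittleO_exp_neg (b := 1/2) (by norm_num) 1
    have h2 : (fun x : ℝ => x * Real.exp (-(1/2 : ℝ) * x ^ 2)) =o[atTop]
        fun x : ℝ => Real.exp (-(1/2 : ℝ) * x) := by
      simpa [Real.rpow_one] using h
    refine h2.trans_tendsto ?_
    rw [tendsto_exp_comp_nhds_zero]
    have h1 : Tendsto (fun x : ℝ => (1/2 : ℝ) * x) atTop atTop := by
      exact Tendsto.const_mul_atTop (by norm_num) tendsto_id
    exact (tendsto_neg_atTop_atBot.comp h1).congr fun x => by simp [Function.comp, neg_mul]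
  have htop : Tendsto (fun x : ℝ => -x * Real.exp (-(1/2 : ℝ) * x ^ 2)) atTop (𝓝 0) := by
    have := hT.neg
    simpa [neg_mul] using this
  have hbot : Tendsto (fun x : ℝ => -x * Real.exp (-(1/2 : ℝ) * x ^ 2)) atBot (𝓝 0) := by
    have := hT.comp tendsto_neg_atBot_atTop
    refine this.congr fun x => ?_
    simp [Function.comp]
  have key := integral_of_hasDerivAt_of_tendsto hF
    (gauss1d_sq_integrable.sub gauss1d_integrable) hbot htop
  rw [integral_sub gauss1d_sq_integrable gauss1d_integrable, gauss1d_integral] at key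
  linarith

lemma two_pi_rpow_half : ((2 * π : ℝ) ^ (-(1:ℝ)/2)) * Real.sqrt (2 * π) = 1 := by
  rw [Real.sqrt_eq_rpow, ← Real.rpow_add Real.two_pi_pos]
  norm_num



/-- one-dimensional standard normal density -/
def phi1 (t : ℝ) : ℝ := (2 * π) ^ (-(1:ℝ)/2) * Real.exp (-(1/2 : ℝ) * t ^ 2)

lemma phi1_integrable : Integrable phi1 := gauss1d_integrable.const_mul _

lemma phi1_integral : ∫ t, phi1 t = 1 := by
  unfold phi1
  rw [integral_const_mul, gauss1d_integral, two_pi_rpow_half]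

lemma sq_phi1_integrable : Integrable (fun t => t ^ 2 * phi1 t) := by
  have := gauss1d_sq_integrable.const_mul ((2 * π : ℝ) ^ (-(1:ℝ)/2))
  refine this.congr (ae_of_all _ fun t => ?_)
  unfold phi1; ring

lemma sq_phi1_integral : ∫ t, t ^ 2 * phi1 t = 1 := by
  have : (fun t : ℝ => t ^ 2 * phi1 t)
      = fun t => (2 * π : ℝ) ^ (-(1:ℝ)/2) * (t ^ 2 * Real.exp (-(1/2 : ℝ) * t ^ 2)) := by
    funext t; unfold phi1; ring
  rw [this, integral_const_mul, gauss1d_sq_integral, two_pi_rpow_half]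

/-- the factor functions -/
def chi (d : ℕ) (i j : Fin d) (t : ℝ) : ℝ := (if j = i then t ^ 2 else 1) * phi1 t

lemma chi_integrable (d : ℕ) (i j : Fin d) : Integrable (chi d i j) := by
  unfold chi
  by_cases h : j = i <;> simp [h, sq_phi1_integrable, phi1_integrable]

lemma chi_integral (d : ℕ) (i j : Fin d) : ∫ t, chi d i j t = 1 := by
  unfold chi
  by_cases h : j = i <;> simp [h, sq_phi1_integral, phi1_integral]

lemma pi_pointwise (d : ℕ) (y : Fin d → ℝ) :
    (∑ i, (y i) ^ 2) * ∏ j, phi1 (y j) = ∑ i, ∏ j, chi d i j (y j) := by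
  rw [Finset.sum_mul]
  refine Finset.sum_congr rfl fun i _ => ?_
  unfold chi
  rw [Finset.prod_mul_distrib, Finset.prod_ite_eq']
  simp

lemma pi_integrable (d : ℕ) :
    Integrable (fun y : Fin d → ℝ => (∑ i, (y i) ^ 2) * ∏ j, phi1 (y j)) := by
  have : ∀ i : Fin d, Integrable (fun y : Fin d → ℝ => ∏ j, chi d i j (y j)) := fun i =>
    Integrable.fintype_prod (f := fun j => chi d i j) (fun j => chi_integrable d i j)
  have h := integrable_finset_sum (μ := volume) Finset.univ (fun i _ => this i)
  refine h.congr (ae_of_all _ fun y => ?_)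
  exact (pi_pointwise d y).symm

lemma pi_integral (d : ℕ) :
    ∫ y : Fin d → ℝ, (∑ i, (y i) ^ 2) * ∏ j, phi1 (y j) = d := by
  have h1 : ∀ y : Fin d → ℝ, (∑ i, (y i) ^ 2) * ∏ j, phi1 (y j)
      = ∑ i, ∏ j, chi d i j (y j) := pi_pointwise d
  rw [integral_congr_ae (ae_of_all _ h1)]
  rw [integral_finset_sum (μ := volume) _ (fun i _ =>
    Integrable.fintype_prod (f := fun j => chi d i j) (fun j => chi_integrable d i j))]
  have : ∀ i : Fin d, ∫ y : Fin d → ℝ, ∏ j, chi d i j (y j) = 1 := by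
    intro i
    rw [volume_pi, integral_fintype_prod_eq_prod (fun j => chi d i j) (μ := fun _ => volume)]
    simp [chi_integral]
  simp [this]

/-- the d-dimensional standard normal density -/
def gStd (d : ℕ) (x : EuclideanSpace ℝ (Fin d)) : ℝ :=
  (2 * π) ^ (-(d : ℝ)/2) * Real.exp (-(1/2 : ℝ) * ‖x‖ ^ 2)

lemma norm_sq_eq (d : ℕ) (x : EuclideanSpace ℝ (Fin d)) : ‖x‖ ^ 2 = ∑ i, (x i) ^ 2 := by
  rw [EuclideanSpace.norm_eq, Real.sq_sqrt (Finset.sum_nonneg fun i _ => by positivity)]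
  simp [sq_abs]

lemma gStd_fact (d : ℕ) (x : EuclideanSpace ℝ (Fin d)) :
    ‖x‖ ^ 2 * gStd d x = (∑ i, (x i) ^ 2) * ∏ j, phi1 (x j) := by
  unfold gStd phi1
  rw [norm_sq_eq]
  congr 1
  rw [Finset.prod_mul_distrib, Finset.prod_const, Finset.card_univ, Fintype.card_fin,
    ← Real.exp_sum]
  congr 1
  · rw [← Real.rpow_natCast ((2*π : ℝ) ^ (-(1:ℝ)/2)) d, ← Real.rpow_mul Real.two_pi_pos.le]
    congr 1
    push_cast
    ring
  · rw [Finset.mul_sum]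

lemma gStd_integrable (d : ℕ) :
    Integrable (fun x : EuclideanSpace ℝ (Fin d) => ‖x‖ ^ 2 * gStd d x) := by
  have hmp := EuclideanSpace.volume_preserving_symm_measurableEquiv_toLp (Fin d)
  have h := pi_integrable d
  rw [← MeasurePreserving.integrable_comp_emb hmp (MeasurableEquiv.measurableEmbedding _)] at h
  refine h.congr (ae_of_all _ fun x => ?_)
  have he : ∀ i, (MeasurableEquiv.toLp 2 (Fin d → ℝ)).symm x i = x i := fun i => by
    rfl
  simp only [Function.comp_apply, he]
  exact (gStd_fact d x).symm

lemma gStd_integral (d : ℕ) :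
    ∫ x : EuclideanSpace ℝ (Fin d), ‖x‖ ^ 2 * gStd d x = d := by
  have hmp := (EuclideanSpace.volume_preserving_symm_measurableEquiv_toLp (Fin d)).symm
  rw [← hmp.integral_comp (MeasurableEquiv.measurableEmbedding _)
    (fun x : EuclideanSpace ℝ (Fin d) => ‖x‖ ^ 2 * gStd d x), ← pi_integral d]
  refine integral_congr_ae (ae_of_all _ fun y => ?_)
  have he : ∀ i, ((MeasurableEquiv.toLp 2 (Fin d → ℝ)).symm.symm y) i = y i := fun i => by
    rfl
  simp only [gStd_fact, he]







lemma gStd_nonneg (d : ℕ) (x : EuclideanSpace ℝ (Fin d)) : 0 ≤ gStd d x := by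
  unfold gStd
  have := Real.two_pi_pos
  positivity

lemma step1 {d : ℕ} (W : Set (EuclideanSpace ℝ (Fin d)))
    (f : EuclideanSpace ℝ (Fin d) → ℝ) (δ : ℝ) :
    ∫ y in W, f y * (‖y‖ ^ 2 * Real.exp (-2 * δ) * gaussDensity y δ)
      = ∫ x in (Real.exp δ)⁻¹ • W, f (Real.exp δ • x) * (‖x‖ ^ 2 * gStd d x) := by
  set σ := Real.exp δ with hσdef
  have hσ : 0 < σ := Real.exp_pos δ
  set F : EuclideanSpace ℝ (Fin d) → ℝ :=
    fun y => f y * (‖y‖ ^ 2 * Real.exp (-2 * δ) * gaussDensity y δ) with hF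
  have h := Measure.setIntegral_comp_smul_of_pos (volume) F ((σ : ℝ)⁻¹ • W) hσ
  rw [smul_inv_smul₀ hσ.ne'] at h
  rw [finrank_euclideanSpace_fin] at h
  have hE2 : Real.exp (-2 * δ) = (σ * σ)⁻¹ := by
    rw [hσdef, ← Real.exp_add, ← Real.exp_neg]
    ring_nf
  have hEd : Real.exp (-(d : ℝ) * δ) = (σ ^ d)⁻¹ := by
    rw [hσdef, ← Real.exp_nat_mul, ← Real.exp_neg]
    ring_nf
  have hpt : ∀ x, F (σ • x) = (σ ^ d)⁻¹ * (f (σ • x) * (‖x‖ ^ 2 * gStd d x)) := by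
    intro x
    have hns : ‖σ • x‖ = σ * ‖x‖ := by
      rw [norm_smul, Real.norm_eq_abs, abs_of_pos hσ]
    rw [hF]
    simp only [gaussDensity, gStd, hns, hE2, hEd]
    have harg : -(1 / 2) * (σ * ‖x‖) ^ 2 * (σ * σ)⁻¹ = -(1/2 : ℝ) * ‖x‖ ^ 2 := by
      field_simp
    rw [harg]
    field_simp
  have h2 : ∫ y in W, F y = (σ ^ d : ℝ) • ∫ x in (σ : ℝ)⁻¹ • W, F (σ • x) := by
    rw [h, smul_smul]
    rw [mul_inv_cancel₀ (by positivity : (σ:ℝ) ^ d ≠ 0), one_smul]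
  rw [h2]
  simp only [hpt]
  rw [integral_const_mul, smul_eq_mul, ← mul_assoc,
    mul_inv_cancel₀ (by positivity : (σ:ℝ) ^ d ≠ 0), one_mul]

/-- **Claim 2.** Let `W ⊆ ℝ^d` be open and bounded with `0 ∈ W`, and let `f : W → ℝ` be
measurable, continuous at `0` and bounded on `W`. Then
`∫_W f(y) ‖y‖² e^{-2δ} N(y, δ) dy → f(0) · d` as `δ → -∞`. -/
theorem gaussian_second_moment_local
    {d : ℕ} (W : Set (EuclideanSpace ℝ (Fin d)))
    (hWopen : IsOpen W) (hWbdd : Bornology.IsBounded W) (h0W : (0 : EuclideanSpace ℝ (Fin d)) ∈ W)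
    (f : EuclideanSpace ℝ (Fin d) → ℝ) (hf_meas : Measurable f)
    (hf_cont : ContinuousWithinAt f W 0)
    (hf_bdd : ∃ K : ℝ, ∀ y ∈ W, |f y| ≤ K) :
    Tendsto (fun δ : ℝ =>
        ∫ y in W, f y * (‖y‖ ^ 2 * Real.exp (-2 * δ) * gaussDensity y δ))
      atBot (𝓝 (f 0 * (d : ℝ))) := by
  obtain ⟨K, hK⟩ := hf_bdd
  have hsets : ∀ δ : ℝ, (Real.exp δ)⁻¹ • W
      = (fun x : EuclideanSpace ℝ (Fin d) => Real.exp δ • x) ⁻¹' W := by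
    intro δ
    ext x
    rw [Set.mem_inv_smul_set_iff₀ (Real.exp_ne_zero δ), Set.mem_preimage]
  have hmsets : ∀ δ : ℝ, MeasurableSet ((Real.exp δ)⁻¹ • W) := by
    intro δ
    rw [hsets δ]
    exact (measurable_const_smul (Real.exp δ)) hWopen.measurableSet
  have hgmeas : Measurable fun x : EuclideanSpace ℝ (Fin d) => ‖x‖ ^ 2 * gStd d x := by
    apply Measurable.mul
    · exact (measurable_norm.pow_const 2)
    · exact (measurable_const.mul ((measurable_norm.pow_const 2).const_mul
        (-(1/2 : ℝ))).exp : Measurable fun x => gStd d x)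
  have hgnn : ∀ x : EuclideanSpace ℝ (Fin d), 0 ≤ ‖x‖ ^ 2 * gStd d x := fun x => by
    have := gStd_nonneg d x
    positivity
  have main := tendsto_integral_filter_of_dominated_convergence
    (μ := volume) (l := atBot)
    (F := fun δ x => Set.indicator ((Real.exp δ)⁻¹ • W)
      (fun x => f (Real.exp δ • x) * (‖x‖ ^ 2 * gStd d x)) x)
    (f := fun x => f 0 * (‖x‖ ^ 2 * gStd d x))
    (bound := fun x => (max K 0) * (‖x‖ ^ 2 * gStd d x))
    ?_ ?_ ?_ ?_
  · have hval : (∫ x : EuclideanSpace ℝ (Fin d), f 0 * (‖x‖ ^ 2 * gStd d x))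
        = f 0 * (d : ℝ) := by
      rw [integral_const_mul, gStd_integral]
    rw [hval] at main
    refine main.congr fun δ => ?_
    rw [integral_indicator (hmsets δ), ← step1]
  · refine Eventually.of_forall fun δ => ?_
    exact ((( hf_meas.comp (measurable_const_smul (Real.exp δ))).mul hgmeas).indicator
      (hmsets δ)).aestronglyMeasurable
  · refine Eventually.of_forall fun δ => ae_of_all _ fun x => ?_
    by_cases hx : x ∈ (Real.exp δ)⁻¹ • W
    · rw [Set.indicator_of_mem hx]
      have hmem : Real.exp δ • x ∈ W := by
        rwa [Set.mem_inv_smul_set_iff₀ (Real.exp_ne_zero δ)] at hx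
      rw [Real.norm_eq_abs, abs_mul, abs_of_nonneg (hgnn x)]
      exact mul_le_mul_of_nonneg_right ((hK _ hmem).trans (le_max_left _ _)) (hgnn x)
    · rw [Set.indicator_of_notMem hx]
      simp only [norm_zero]
      exact mul_nonneg (le_max_right _ _) (hgnn x)
  · exact (gStd_integrable d).const_mul _
  · refine ae_of_all _ fun x => ?_
    have hσ0 : Tendsto (fun δ : ℝ => Real.exp δ • x) atBot
        (𝓝 (0 : EuclideanSpace ℝ (Fin d))) := by
      have := Real.tendsto_exp_atBot.smul_const x
      simpa using this
    have hevW : ∀ᶠ δ : ℝ in atBot, Real.exp δ • x ∈ W :=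
      hσ0.eventually (hWopen.eventually_mem h0W)
    have h1 : Tendsto (fun δ : ℝ => f (Real.exp δ • x)) atBot (𝓝 (f 0)) :=
      hf_cont.tendsto.comp (tendsto_nhdsWithin_iff.mpr ⟨hσ0, hevW⟩)
    have h2 := h1.mul_const (‖x‖ ^ 2 * gStd d x)
    refine Tendsto.congr' ?_ h2
    refine hevW.mono fun δ hδ => ?_
    dsimp only
    rw [Set.indicator_of_mem]
    rwa [Set.mem_inv_smul_set_iff₀ (Real.exp_ne_zero δ)]
end
end

section
/- Let u : U → ℝ^{D−d} be smooth on an open set U ⊆ ℝ^d containing 0, with u(0) = 0 and Du(0) = 0, and define G(y) := (1/2) log(‖y‖² + ‖u(y)‖²) for y ≠ 0. Then there exists an open set W ⊆ U containing 0 such that the gradient ∇G(y) = (y + (Du)(y)u(y)) / (‖y‖² + ‖u(y)‖²) is well-defined and nonvanishing for every y ∈ W ∖ {0}. -/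
open Real Filter Set Topology

noncomputable section

/-- **Proposition 3.** Let `u : U → ℝ^{D-d}` be smooth on an open `U ∋ 0` with `u(0) = 0` and
`Du(0) = 0` (here `m` plays the role of `D - d`), and let
`G(y) = (1/2) log(‖y‖² + ‖u(y)‖²)` for `y ≠ 0`. Then there is an open `W ⊆ U` containing `0`
such that for every `y ∈ W \ {0}`, `G` has gradient
`∇G(y) = (y + Du(y)ᵀ u(y)) / (‖y‖² + ‖u(y)‖²)` at `y`, and this gradient is nonvanishing. -/
theorem gradient_G_nonvanishing
    {d m : ℕ} (U : Set (EuclideanSpace ℝ (Fin d)))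
    (hU : IsOpen U) (h0U : (0 : EuclideanSpace ℝ (Fin d)) ∈ U)
    (u : EuclideanSpace ℝ (Fin d) → EuclideanSpace ℝ (Fin m))
    (hu : ContDiffOn ℝ (⊤ : ℕ∞) u U) (hu0 : u 0 = 0) (hDu0 : fderiv ℝ u 0 = 0) :
    ∃ W : Set (EuclideanSpace ℝ (Fin d)), IsOpen W ∧ (0 : EuclideanSpace ℝ (Fin d)) ∈ W ∧ W ⊆ U ∧
      ∀ y ∈ W, y ≠ 0 →
        HasGradientAt (fun z => (1 / 2) * Real.log (‖z‖ ^ 2 + ‖u z‖ ^ 2))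
          ((‖y‖ ^ 2 + ‖u y‖ ^ 2)⁻¹ • (y + ContinuousLinearMap.adjoint (fderiv ℝ u y) (u y))) y ∧
        (‖y‖ ^ 2 + ‖u y‖ ^ 2)⁻¹ • (y + ContinuousLinearMap.adjoint (fderiv ℝ u y) (u y)) ≠ 0 := by
  -- continuity of the derivative
  have hcont : ContinuousOn (fderiv ℝ u) U :=
    hu.continuousOn_fderiv_of_isOpen hU (by exact_mod_cast le_top)
  have hcont0 : ContinuousAt (fderiv ℝ u) 0 :=
    hcont.continuousAt (hU.mem_nhds h0U)
  have hsmall : {z | ‖fderiv ℝ u z‖ < 1/2} ∈ 𝓝 (0 : EuclideanSpace ℝ (Fin d)) := by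
    have h0 : ‖fderiv ℝ u 0‖ < 1/2 := by rw [hDu0]; norm_num
    exact hcont0.norm (Iio_mem_nhds h0)
  obtain ⟨r, hr, hball⟩ := Metric.mem_nhds_iff.1
    (inter_mem (hU.mem_nhds h0U) hsmall)
  set W := Metric.ball (0 : EuclideanSpace ℝ (Fin d)) r with hW
  have hWU : W ⊆ U := fun z hz => (hball hz).1
  have hWO : IsOpen W := Metric.isOpen_ball
  have h0W : (0 : EuclideanSpace ℝ (Fin d)) ∈ W := Metric.mem_ball_self hr
  have hDsmall : ∀ z ∈ W, ‖fderiv ℝ u z‖ ≤ 1/2 := fun z hz => (hball hz).2.le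
  have hdiff : ∀ z ∈ W, DifferentiableAt ℝ u z := fun z hz =>
    (hu.contDiffAt (hU.mem_nhds (hWU hz))).differentiableAt (by simp)
  -- Lipschitz bound: ‖u z‖ ≤ (1/2) ‖z‖ on W
  have hulip : ∀ z ∈ W, ‖u z‖ ≤ (1/2) * ‖z‖ := by
    intro z hz
    have := (convex_ball (0 : EuclideanSpace ℝ (Fin d)) r).norm_image_sub_le_of_norm_fderiv_le
      hdiff hDsmall h0W hz
    simpa [hu0] using this
  refine ⟨W, hWO, h0W, hWU, fun y hy hy0 => ?_⟩
  have hd : HasFDerivAt u (fderiv ℝ u y) y := (hdiff y hy).hasFDerivAt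
  have hynorm : 0 < ‖y‖ := norm_pos_iff.2 hy0
  have hφpos : 0 < ‖y‖ ^ 2 + ‖u y‖ ^ 2 := by positivity
  have hφne : ‖y‖ ^ 2 + ‖u y‖ ^ 2 ≠ 0 := ne_of_gt hφpos
  constructor
  · -- the gradient computation
    have h1 : HasFDerivAt (fun z : EuclideanSpace ℝ (Fin d) => ‖z‖ ^ 2 + ‖u z‖ ^ 2)
        (2 • innerSL ℝ y + 2 • (innerSL ℝ (u y)).comp (fderiv ℝ u y)) y :=
      ((hasStrictFDerivAt_norm_sq y).hasFDerivAt).add hd.norm_sq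
    have h2 := (h1.log hφne).const_mul (1/2 : ℝ)
    rw [hasGradientAt_iff_hasFDerivAt]
    convert h2 using 1
    · rfl
    ext v
    simp only [InnerProductSpace.toDual_apply_apply, ContinuousLinearMap.smul_apply,
      ContinuousLinearMap.add_apply, ContinuousLinearMap.comp_apply, innerSL_apply_apply,
      smul_eq_mul, inner_add_left, real_inner_smul_left,
      ContinuousLinearMap.adjoint_inner_left, nsmul_eq_mul]
    field_simp
    ring
  · -- the gradient is nonvanishing
    intro hcontra
    have h3 : y + ContinuousLinearMap.adjoint (fderiv ℝ u y) (u y) = 0 := by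
      have := congrArg (fun w => (‖y‖ ^ 2 + ‖u y‖ ^ 2) • w) hcontra
      simpa [smul_smul, mul_inv_cancel₀ hφne] using this
    have hadj : ‖ContinuousLinearMap.adjoint (fderiv ℝ u y) (u y)‖ < ‖y‖ := by
      calc ‖ContinuousLinearMap.adjoint (fderiv ℝ u y) (u y)‖
          ≤ ‖ContinuousLinearMap.adjoint (fderiv ℝ u y)‖ * ‖u y‖ :=
            ContinuousLinearMap.le_opNorm _ _
        _ = ‖fderiv ℝ u y‖ * ‖u y‖ := by
            rw [LinearIsometryEquiv.norm_map]
        _ ≤ (1/2) * ((1/2) * ‖y‖) := by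
            apply mul_le_mul (hDsmall y hy) (hulip y hy) (norm_nonneg _) (by norm_num)
        _ < ‖y‖ := by linarith
    rw [eq_neg_of_add_eq_zero_right h3, norm_neg] at hadj
    exact lt_irrefl _ hadj
end
end
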